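/- Let p be an odd prime, F a field containing a primitive p-th root of unity ξ_p, a ∈ F^× with K = F(a^{1/p}) a degree p extension, and σ a generator of G = Gal(K/F). Let J = K^×/K^{×p} and J_{p-1} = ker((σ-1)^{p-1} acting on J). For [γ] ∈ J_{p-1}, N(γ) ∈ K^{×p} ∩ F^×, and the element e([γ]) ∈ F_p defined by ξ_p^{e([γ])} = σ(N(γ)^{1/p})/N(γ)^{1/p} is well-defined (independent of the representative γ and of the choice of p-th root) and e: J_{p-1} → F_p is a group homomorphism. -/

import Mathlib

noncomputable section

/-- The subgroup of `p`-th powers in `K^×`. -/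
def pthPowers (p : ℕ) (K : Type) [Field K] : Subgroup Kˣ :=
  (powMonoidHom p : Kˣ →* Kˣ).range

instance (p : ℕ) (K : Type) [Field K] : (pthPowers p K).Normal :=
  Subgroup.normal_of_comm _

/-- The `𝔽_p[Gal(K/F)]`-module `J = K^×/K^{×p}` (written multiplicatively). -/
abbrev Jmod (p : ℕ) (K : Type) [Field K] := Kˣ ⧸ pthPowers p K

/-- The class `[γ] ∈ J` of `γ ∈ K^×`. -/
def mkJ (p : ℕ) (K : Type) [Field K] : Kˣ →* Jmod p K := QuotientGroup.mk' _

/-- The action of an `F`-automorphism `σ` of `K` on `K^×`. -/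
def sigU (p : ℕ) (K : Type) [Field K] (F : Type) [Field F] [Algebra F K]
    (σ : K ≃ₐ[F] K) : Kˣ →* Kˣ :=
  Units.map (σ.toAlgHom.toRingHom.toMonoidHom)

/-- The action of `σ` on `J = K^×/K^{×p}`. -/
def sigJ (p : ℕ) (K : Type) [Field K] (F : Type) [Field F] [Algebra F K]
    (σ : K ≃ₐ[F] K) : Jmod p K →* Jmod p K :=
  QuotientGroup.map _ _ (sigU p K F σ) (by
    rintro x ⟨y, rfl⟩
    exact ⟨sigU p K F σ y, by simp [powMonoidHom, map_pow]⟩)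

/-- The action of `σ - 1` on the multiplicative module `J`: `x ↦ σ(x)·x⁻¹`. -/
def rhoJ (p : ℕ) (K : Type) [Field K] (F : Type) [Field F] [Algebra F K]
    (σ : K ≃ₐ[F] K) : Jmod p K →* Jmod p K :=
  MonoidHom.mk' (fun x => sigJ p K F σ x * x⁻¹) (by
    intro a b
    show sigJ p K F σ (a * b) * (a * b)⁻¹ = (sigJ p K F σ a * a⁻¹) * (sigJ p K F σ b * b⁻¹)
    rw [map_mul, mul_inv_rev, mul_comm (b⁻¹) (a⁻¹)]
    exact mul_mul_mul_comm (sigJ p K F σ a) (sigJ p K F σ b) a⁻¹ b⁻¹)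

/-- The action of `(σ - 1)^n` on `J`. -/
def rhoPowJ (p : ℕ) (K : Type) [Field K] (F : Type) [Field F] [Algebra F K]
    (σ : K ≃ₐ[F] K) : ℕ → (Jmod p K →* Jmod p K)
  | 0 => MonoidHom.id _
  | n + 1 => (rhoJ p K F σ).comp (rhoPowJ p K F σ n)

end

section Aux

variable (p : ℕ) (K : Type) [Field K] (F : Type) [Field F] [Algebra F K]

lemma Jmod_pow_p (x : Jmod p K) : x ^ p = 1 := by
  refine QuotientGroup.induction_on x ?_
  intro γ
  rw [← QuotientGroup.mk_pow]
  exact (QuotientGroup.eq_one_iff _).mpr ⟨γ, rfl⟩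

variable (sigma : K ≃ₐ[F] K)

lemma sigU_pow_succ (i : ℕ) (γ : Kˣ) :
    sigU p K F (sigma ^ (i + 1)) γ = sigU p K F sigma (sigU p K F (sigma ^ i) γ) := by
  apply Units.ext
  show (sigma ^ (i + 1)) (γ : K) = sigma ((sigma ^ i) (γ : K))
  rw [pow_succ']
  rfl

lemma geom_poly_identity [Fact p.Prime] :
    (Polynomial.X - 1 : Polynomial (ZMod p)) ^ (p - 1)
      = ∑ i ∈ Finset.range p, (Polynomial.X : Polynomial (ZMod p)) ^ i := by
  have hp : Fact p.Prime := inferInstance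
  haveI : CharP (Polynomial (ZMod p)) p :=
    charP_of_injective_algebraMap' (ZMod p) (A := Polynomial (ZMod p)) p
  have hX : (Polynomial.X - 1 : Polynomial (ZMod p)) ≠ 0 := by
    simpa using Polynomial.X_sub_C_ne_zero (R := ZMod p) 1
  have h1 : (Polynomial.X - 1 : Polynomial (ZMod p)) ^ p = Polynomial.X ^ p - 1 := by
    have := sub_pow_char (R := Polynomial (ZMod p)) (x := Polynomial.X) (y := 1) (p := p)
    simpa using this
  have h2 : (Polynomial.X - 1 : Polynomial (ZMod p)) * (Polynomial.X - 1) ^ (p - 1)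
      = (Polynomial.X - 1) * ∑ i ∈ Finset.range p, (Polynomial.X : Polynomial (ZMod p)) ^ i := by
    rw [← pow_succ', Nat.sub_add_cancel hp.out.one_le, h1, ← geom_sum_mul, mul_comm]
  exact mul_left_cancel₀ hX h2

lemma rhoPow_formula [Fact p.Prime] (γ : Kˣ) :
    rhoPowJ p K F sigma (p - 1) (mkJ p K γ) =
      mkJ p K (∏ i ∈ Finset.range p, sigU p K F (sigma ^ i) γ) := by
  have hp : Fact p.Prime := inferInstance
  haveI : NeZero p := ⟨hp.out.ne_zero⟩
  letI iM : AddCommMonoid (Additive (Jmod p K)) := AddCommGroup.toAddCommMonoid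
  haveI : Module (ZMod p) (Additive (Jmod p K)) :=
    AddCommGroup.zmodModule (n := p) (G := Additive (Jmod p K)) (by
      intro x
      rw [← ofMul_toMul x, ← ofMul_pow, Jmod_pow_p p K, ofMul_one])
  let s0 : Additive (Jmod p K) →+ Additive (Jmod p K) :=
    MonoidHom.toAdditive (sigJ p K F sigma)
  let s : Module.End (ZMod p) (Additive (Jmod p K)) := s0.toZModLinearMap p (M := Additive (Jmod p K)) (M₁ := Additive (Jmod p K))
  have hs : ∀ y : Jmod p K,
      s (Additive.ofMul y) = Additive.ofMul (sigJ p K F sigma y) := fun y => rfl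
  have hpow : ∀ (n : ℕ) (x : Jmod p K),
      Additive.ofMul (rhoPowJ p K F sigma n x) = ((s - 1) ^ n) (Additive.ofMul x) := by
    intro n
    induction n with
    | zero => intro x; simp [rhoPowJ]
    | succ n ih =>
      intro x
      have h1 : rhoPowJ p K F sigma (n + 1) x
          = sigJ p K F sigma (rhoPowJ p K F sigma n x) * (rhoPowJ p K F sigma n x)⁻¹ := rfl
      rw [h1, ofMul_mul, ofMul_inv, ← hs, ih, pow_succ', Module.End.mul_apply,
        LinearMap.sub_apply, Module.End.one_apply]
      exact (sub_eq_add_neg _ _).symm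
  have heval : ((s - 1) ^ (p - 1) : Module.End (ZMod p) (Additive (Jmod p K)))
      = ∑ i ∈ Finset.range p, s ^ i := by
    have h := congrArg (Polynomial.aeval s) (geom_poly_identity p)
    simpa using h
  have hiter : ∀ i : ℕ, (s ^ i) (Additive.ofMul (mkJ p K γ))
      = Additive.ofMul (mkJ p K (sigU p K F (sigma ^ i) γ)) := by
    intro i
    induction i with
    | zero =>
      have h0 : sigU p K F (sigma ^ 0) γ = γ := by
        apply Units.ext
        show (sigma ^ 0) (γ : K) = (γ : K)
        rw [pow_zero]
        rfl
      rw [pow_zero, Module.End.one_apply, h0]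
    | succ i ih =>
      rw [pow_succ', Module.End.mul_apply, ih, hs, sigU_pow_succ]
      rfl
  have hmain := hpow (p - 1) (mkJ p K γ)
  rw [heval, LinearMap.sum_apply] at hmain
  have hsum : ∑ i ∈ Finset.range p, (s ^ i) (Additive.ofMul (mkJ p K γ))
      = Additive.ofMul (mkJ p K (∏ i ∈ Finset.range p, sigU p K F (sigma ^ i) γ)) := by
    rw [map_prod, ofMul_prod]
    exact Finset.sum_congr rfl fun i _ => hiter i
  rw [hsum] at hmain
  exact hmain

end Aux

set_option maxHeartbeats 1000000 in
/-- Let `p` be an odd prime, `ξ` a primitive `p`-th root of unity in `F`,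
`K = F(a^{1/p})` of degree `p`, `σ` a generator of `Gal(K/F)`, and
`J_{p-1} = ker (σ-1)^{p-1} ⊆ J = K^×/K^{×p}`.  For `[γ] ∈ J_{p-1}` the norm `N(γ)` is a
`p`-th power in `K^×` (and lies in `F^×`), and there is a unique homomorphism
`e : J_{p-1} → 𝔽_p` (the index) with `ξ^{e([γ])} = σ(N(γ)^{1/p})/N(γ)^{1/p}`,
independent of the representative `γ` and of the choice of `p`-th root. -/
theorem stmt_8 (p : ℕ) [Fact p.Prime] (hp2 : Odd p)
    (F K : Type) [Field F] [Field K] [Algebra F K]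
    (xi : F) (hxi : IsPrimitiveRoot xi p)
    (a : Fˣ) (alpha : K) (halpha : alpha ^ p = algebraMap F K a)
    (hadj : Algebra.adjoin F {alpha} = ⊤)
    (hdeg : Module.finrank F K = p)
    (sigma : K ≃ₐ[F] K) (hgen : ∀ eta : K ≃ₐ[F] K, eta ∈ Subgroup.zpowers sigma) :
    (∀ γ : Kˣ, mkJ p K γ ∈ (rhoPowJ p K F sigma (p - 1)).ker →
      ∃ r : K, r ≠ 0 ∧ r ^ p = algebraMap F K (Algebra.norm F (γ : K))) ∧
    (∃! e : ↥((rhoPowJ p K F sigma (p - 1)).ker) →* Multiplicative (ZMod p),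
      ∀ (γ : Kˣ) (hγ : mkJ p K γ ∈ (rhoPowJ p K F sigma (p - 1)).ker) (r : K),
        r ≠ 0 → r ^ p = algebraMap F K (Algebra.norm F (γ : K)) →
        sigma r = algebraMap F K xi ^ (Multiplicative.toAdd (e ⟨mkJ p K γ, hγ⟩)).val * r) := by
  classical
  have hp : Fact p.Prime := inferInstance
  haveI : NeZero p := ⟨hp.out.ne_zero⟩
  have hppos : 0 < p := hp.out.pos
  haveI : FiniteDimensional F K :=
    Module.finite_of_finrank_pos (by rw [hdeg]; exact hppos)
  have hprim : (primitiveRoots (Module.finrank F K) F).Nonempty :=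
    ⟨xi, (mem_primitiveRoots (by rw [hdeg]; exact hppos)).mpr
      (by rw [hdeg]; exact hxi)⟩
  have halpha' : alpha ^ Module.finrank F K = algebraMap F K (a : F) := by
    rw [hdeg]; exact halpha
  have hadj' : IntermediateField.adjoin F {alpha} = ⊤ := by
    apply IntermediateField.toSubalgebra_injective
    rw [IntermediateField.top_toSubalgebra,
      IntermediateField.adjoin_simple_toSubalgebra_of_isAlgebraic (IsAlgebraic.of_finite F alpha),
      hadj]
  have H := irreducible_X_pow_sub_C_of_root_adjoin_eq_top halpha' hadj'
  haveI := isSplittingField_X_pow_sub_C_of_root_adjoin_eq_top hprim halpha' hadj'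
  haveI : IsGalois F K := isGalois_of_isSplittingField_X_pow_sub_C hprim H K
  have hcard : Fintype.card (K ≃ₐ[F] K) = p := by
    rw [← Nat.card_eq_fintype_card, IsGalois.card_aut_eq_finrank, hdeg]
  have horder : orderOf sigma = p := by
    rw [orderOf_eq_card_of_forall_mem_zpowers hgen, Nat.card_eq_fintype_card, hcard]
  -- norm as product of powers of sigma
  have hnorm : ∀ x : K,
      algebraMap F K (Algebra.norm F x) = ∏ i ∈ Finset.range p, (sigma ^ i) x := by
    intro x
    rw [Algebra.norm_eq_prod_automorphisms]
    refine (Finset.prod_bij (fun (i : ℕ) (_ : i ∈ Finset.range p) => sigma ^ i)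
      (fun i _ => Finset.mem_univ _) ?_ ?_ (fun i _ => rfl)).symm
    · intro i hi j hj h
      refine pow_injOn_Iio_orderOf ?_ ?_ h
      · simpa [horder] using Finset.mem_range.mp hi
      · simpa [horder] using Finset.mem_range.mp hj
    · intro η _
      obtain ⟨n, hn⟩ := mem_powers_iff_mem_zpowers.mpr (hgen η)
      refine ⟨n % p, Finset.mem_range.mpr (Nat.mod_lt _ hppos), ?_⟩
      show sigma ^ (n % p) = η
      rw [← hn, ← horder, pow_mod_orderOf]
  -- Part 1
  have part1 : ∀ γ : Kˣ, mkJ p K γ ∈ (rhoPowJ p K F sigma (p - 1)).ker →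
      ∃ r : K, r ≠ 0 ∧ r ^ p = algebraMap F K (Algebra.norm F (γ : K)) := by
    intro γ hγ
    rw [MonoidHom.mem_ker, rhoPow_formula] at hγ
    have hmem : (∏ i ∈ Finset.range p, sigU p K F (sigma ^ i) γ) ∈ pthPowers p K :=
      (QuotientGroup.eq_one_iff _).mp hγ
    obtain ⟨w, hw⟩ := hmem
    refine ⟨(w : K), w.ne_zero, ?_⟩
    calc ((w : K)) ^ p = ((w ^ p : Kˣ) : K) := by rw [Units.val_pow_eq_pow_val]
      _ = ((∏ i ∈ Finset.range p, sigU p K F (sigma ^ i) γ : Kˣ) : K) := by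
          rw [← hw]; rfl
      _ = ∏ i ∈ Finset.range p, (sigma ^ i) (γ : K) := by
          show (Units.coeHom K) (∏ i ∈ Finset.range p, sigU p K F (sigma ^ i) γ) = _
          rw [map_prod]
          rfl
      _ = algebraMap F K (Algebra.norm F (γ : K)) := (hnorm _).symm
  refine ⟨part1, ?_⟩
  -- setup for part 2
  set ξK : K := algebraMap F K xi with hξKdef
  have hxiK : IsPrimitiveRoot ξK p := hxi.map_of_injective (algebraMap F K).injective
  have horderξ : orderOf ξK = p := hxiK.eq_orderOf.symm
  have hpowinj : ∀ c d : ZMod p, ξK ^ c.val = ξK ^ d.val → c = d := by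
    intro c d h
    exact ZMod.val_injective p (hxiK.pow_inj (ZMod.val_lt c) (ZMod.val_lt d) h)
  have hperiod : ∀ m : ℕ, ξK ^ (m % p) = ξK ^ m := by
    intro m
    conv_rhs => rw [← Nat.div_add_mod m p]
    rw [pow_add, pow_mul, hxiK.pow_eq_one, one_pow, one_mul]
  have hval : ∀ c d : ZMod p, ξK ^ (c + d).val = ξK ^ c.val * ξK ^ d.val := by
    intro c d
    rw [← pow_add, ZMod.val_add, hperiod]
  -- key comparison lemma
  have key : ∀ (γ γ' : Kˣ), mkJ p K γ = mkJ p K γ' → ∀ (r r' : K), r ≠ 0 → r' ≠ 0 →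
      r ^ p = algebraMap F K (Algebra.norm F (γ : K)) →
      r' ^ p = algebraMap F K (Algebra.norm F (γ' : K)) →
      sigma r * r' = sigma r' * r := by
    intro γ γ' hq r r' hr hr' hrp hrp'
    obtain ⟨z, hz, hzz⟩ := (QuotientGroup.mk'_eq_mk' _).mp hq
    obtain ⟨u, rfl⟩ := hz
    set t : K := algebraMap F K (Algebra.norm F (u : K)) with ht
    have htne : t ≠ 0 := by
      rw [ht]
      simp only [ne_eq, map_eq_zero]
      exact Algebra.norm_ne_zero_iff.mpr (Units.ne_zero u)
    have hσt : sigma t = t := sigma.commutes _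
    have hNres : Algebra.norm F ((γ : K)) * (Algebra.norm F ((u : K))) ^ p
        = Algebra.norm F ((γ' : K)) := by
      rw [← hzz]
      show _ = Algebra.norm F ((γ * powMonoidHom p u : Kˣ) : K)
      rw [Units.val_mul, map_mul]
      congr 1
      show _ = Algebra.norm F ((u ^ p : Kˣ) : K)
      rw [Units.val_pow_eq_pow_val, map_pow]
    have hprodp : r' ^ p = (r * t) ^ p := by
      rw [mul_pow, hrp, hrp', ht, ← map_pow, ← map_mul, hNres]
    have hrt : r * t ≠ 0 := mul_ne_zero hr htne
    have hzeta : (r' / (r * t)) ^ p = 1 := by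
      rw [div_pow, hprodp, div_self (pow_ne_zero p hrt)]
    obtain ⟨i, hip, hi⟩ := hxiK.eq_pow_of_pow_eq_one hzeta
    have hr'eq : r' = ξK ^ i * (r * t) := by
      rw [hi, div_mul_cancel₀ _ hrt]
    have hσξ : sigma ξK = ξK := sigma.commutes _
    rw [hr'eq, map_mul, map_mul, map_pow, hσξ, hσt]
    ring
  -- existence of the index for each element of the kernel
  have hex : ∀ x : ((rhoPowJ p K F sigma (p - 1)).ker), ∃ c : ZMod p,
      ∃ γ : Kˣ, mkJ p K γ = (x : Jmod p K) ∧ ∃ r : K, r ≠ 0 ∧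
        r ^ p = algebraMap F K (Algebra.norm F (γ : K)) ∧ sigma r = ξK ^ c.val * r := by
    intro x
    obtain ⟨γ, hγq⟩ := QuotientGroup.mk'_surjective (pthPowers p K) (x : Jmod p K)
    have hγq' : mkJ p K γ = (x : Jmod p K) := hγq
    have hmem : mkJ p K γ ∈ (rhoPowJ p K F sigma (p - 1)).ker := by
      rw [hγq']; exact x.2
    obtain ⟨r, hr0, hrp⟩ := part1 γ hmem
    have h1 : (sigma r) ^ p = r ^ p := by
      rw [← map_pow, hrp, sigma.commutes, ← hrp]
    have hzeta : (sigma r / r) ^ p = 1 := by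
      rw [div_pow, h1, div_self (pow_ne_zero p hr0)]
    obtain ⟨i, hip, hi⟩ := hxiK.eq_pow_of_pow_eq_one hzeta
    refine ⟨(i : ZMod p), γ, hγq', r, hr0, hrp, ?_⟩
    have hv : ((i : ZMod p)).val = i % p := ZMod.val_natCast _ _
    rw [hv, hperiod, hi, div_mul_cancel₀ _ hr0]
  choose f hf using hex
  -- uniqueness of the index
  have huniq : ∀ (x : ((rhoPowJ p K F sigma (p - 1)).ker)) (c : ZMod p),
      (∃ γ : Kˣ, mkJ p K γ = (x : Jmod p K) ∧ ∃ r : K, r ≠ 0 ∧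
        r ^ p = algebraMap F K (Algebra.norm F (γ : K)) ∧ sigma r = ξK ^ c.val * r) →
      ∀ (γ : Kˣ), mkJ p K γ = (x : Jmod p K) → ∀ r : K, r ≠ 0 →
        r ^ p = algebraMap F K (Algebra.norm F (γ : K)) →
        sigma r = ξK ^ c.val * r := by
    rintro x c ⟨γ₀, hγ₀, r₀, h00, hp0, hs0⟩ γ hγq r hr0 hrp
    have hk := key γ₀ γ (hγ₀.trans hγq.symm) r₀ r h00 hr0 hp0 hrp
    -- hk : sigma r₀ * r = sigma r * r₀
    have : ξK ^ c.val * r₀ * r = sigma r * r₀ := by rw [← hs0]; exact hk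
    have h2 : sigma r * r₀ = (ξK ^ c.val * r) * r₀ := by
      rw [← this]; ring
    exact mul_right_cancel₀ h00 h2
  -- additivity
  have hadd : ∀ x y : ((rhoPowJ p K F sigma (p - 1)).ker), f (x * y) = f x + f y := by
    intro x y
    obtain ⟨γ, hγq, r, hr0, hrp, hσr⟩ := hf x
    obtain ⟨δ, hδq, w, hw0, hwp, hσw⟩ := hf y
    have hq : mkJ p K (γ * δ) = ((x * y : _) : Jmod p K) := by
      rw [map_mul, hγq, hδq]; rfl
    have hrwp : (r * w) ^ p = algebraMap F K (Algebra.norm F ((γ * δ : Kˣ) : K)) := by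
      rw [Units.val_mul, map_mul, map_mul, mul_pow, hrp, hwp]
    have hσrw : sigma (r * w) = ξK ^ (f x + f y).val * (r * w) := by
      rw [map_mul, hσr, hσw, hval]; ring
    have h1 := huniq (x * y) (f (x * y)) (hf (x * y)) (γ * δ) hq (r * w)
      (mul_ne_zero hr0 hw0) hrwp
    have h2 : ξK ^ (f (x * y)).val * (r * w) = ξK ^ (f x + f y).val * (r * w) :=
      h1.symm.trans hσrw
    exact hpowinj _ _ (mul_right_cancel₀ (mul_ne_zero hr0 hw0) h2)
  -- the homomorphism
  let e : ((rhoPowJ p K F sigma (p - 1)).ker) →* Multiplicative (ZMod p) :=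
    MonoidHom.mk' (fun x => Multiplicative.ofAdd (f x)) (by
      intro x y
      show Multiplicative.ofAdd (f (x * y))
          = Multiplicative.ofAdd (f x) * Multiplicative.ofAdd (f y)
      rw [hadd x y]
      rfl)
  have hprop : ∀ (γ : Kˣ) (hγ : mkJ p K γ ∈ (rhoPowJ p K F sigma (p - 1)).ker) (r : K),
      r ≠ 0 → r ^ p = algebraMap F K (Algebra.norm F (γ : K)) →
      sigma r = ξK ^ (Multiplicative.toAdd (e ⟨mkJ p K γ, hγ⟩)).val * r := by
    intro γ hγ r hr0 hrp
    exact huniq ⟨mkJ p K γ, hγ⟩ (f ⟨mkJ p K γ, hγ⟩) (hf _) γ rfl r hr0 hrp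
  refine ⟨e, hprop, ?_⟩
  intro e' he'
  ext x
  obtain ⟨γ, hγq⟩ := QuotientGroup.mk'_surjective (pthPowers p K) (x : Jmod p K)
  have hγq' : mkJ p K γ = (x : Jmod p K) := hγq
  have hmem : mkJ p K γ ∈ (rhoPowJ p K F sigma (p - 1)).ker := by
    rw [hγq']; exact x.2
  obtain ⟨r, hr0, hrp⟩ := part1 γ hmem
  have h1 := he' γ hmem r hr0 hrp
  have h2 := hprop γ hmem r hr0 hrp
  have hx' : (⟨mkJ p K γ, hmem⟩ : ((rhoPowJ p K F sigma (p - 1)).ker)) = x :=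
    Subtype.ext hγq'
  rw [← hx']
  have h3 : ξK ^ (Multiplicative.toAdd (e' ⟨mkJ p K γ, hmem⟩)).val * r
      = ξK ^ (Multiplicative.toAdd (e ⟨mkJ p K γ, hmem⟩)).val * r := by
    rw [← h1, ← h2]
  have h4 := hpowinj _ _ (mul_right_cancel₀ hr0 h3)
  exact Multiplicative.toAdd.injective h4
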